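/- Let T be a finite tree (a nonempty connected acyclic simple graph) and let X ⊆ V(T). Then there exists a set F ⊆ E(T) with |F| ≤ 5·|X| that is dismembering for (T,X). -/

import Mathlib

set_option linter.unusedSectionVars false
set_option maxHeartbeats 1000000


variable {V : Type*}

/-- The set of endpoints of edges of `F`. -/
def edgeVerts (F : Finset (Sym2 V)) : Set V := {v | ∃ e ∈ F, v ∈ e}

/-- `F` is dismembering for `(G, X)`: every connected component of `G` minus the
edges of `F` either contains at most one vertex of `X ∪ V(F)`, or contains no
vertex of `X` and exactly two vertices of `V(F)`, each incident to exactly one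
edge of `F`. -/
def IsDismembering [DecidableEq V] (G : SimpleGraph V) (X : Set V)
    (F : Finset (Sym2 V)) : Prop :=
  ∀ c : (G.deleteEdges (F : Set (Sym2 V))).ConnectedComponent,
    (c.supp ∩ (X ∪ edgeVerts F)).Subsingleton ∨
      (c.supp ∩ X = ∅ ∧
        ∃ a b : V, a ≠ b ∧ c.supp ∩ edgeVerts F = {a, b} ∧
          (F.filter fun e => a ∈ e).card = 1 ∧
          (F.filter fun e => b ∈ e).card = 1)

namespace Dismember

open SimpleGraph Walk

lemma mem_edgeVerts {F : Finset (Sym2 V)} {v : V} : v ∈ edgeVerts F ↔ ∃ e ∈ F, v ∈ e := Iff.rfl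

lemma edgeVerts_union [DecidableEq V] {F F' : Finset (Sym2 V)} :
    edgeVerts (F ∪ F') = edgeVerts F ∪ edgeVerts F' := by
  ext v
  constructor
  · rintro ⟨e, he, hv⟩
    rcases Finset.mem_union.mp he with h | h
    · exact Or.inl ⟨e, h, hv⟩
    · exact Or.inr ⟨e, h, hv⟩
  · rintro (⟨e, he, hv⟩ | ⟨e, he, hv⟩) <;> exact ⟨e, Finset.mem_union.mpr (by tauto), hv⟩

lemma edgeVerts_singleton {e : Sym2 V} : edgeVerts {e} = {v | v ∈ e} := by
  ext v; simp [edgeVerts]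

variable [DecidableEq V] {G : SimpleGraph V}

lemma mem_supp_mk {Γ : SimpleGraph V} {x y : V} :
    y ∈ (Γ.connectedComponentMk x).supp ↔ Γ.Reachable x y := by
  rw [ConnectedComponent.mem_supp_iff, ConnectedComponent.eq]
  exact ⟨Reachable.symm, Reachable.symm⟩

lemma exists_path_avoiding {S : Set (Sym2 V)} {a b : V}
    (h : (G.deleteEdges S).Reachable a b) :
    ∃ p : G.Walk a b, p.IsPath ∧ ∀ e ∈ p.edges, e ∉ S := by
  obtain ⟨w⟩ := h
  let q : (G.deleteEdges S).Walk a b := (w.toPath : (G.deleteEdges S).Walk a b)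
  have hq : q.IsPath := (w.toPath).2
  have hsub : ∀ e ∈ q.edges, e ∈ G.edgeSet := by
    intro e he
    have := q.edges_subset_edgeSet he
    rw [edgeSet_deleteEdges] at this
    exact this.1
  refine ⟨q.transfer G hsub, hq.transfer hsub, ?_⟩
  intro e he
  rw [Walk.edges_transfer] at he
  have := q.edges_subset_edgeSet he
  rw [edgeSet_deleteEdges] at this
  exact this.2

lemma reachable_of_walk_avoiding {S : Set (Sym2 V)} {a b : V} (p : G.Walk a b)
    (h : ∀ e ∈ p.edges, e ∉ S) : (G.deleteEdges S).Reachable a b :=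
  ⟨p.toDeleteEdges S h⟩

lemma not_reachable_deleteEdges (hG : G.IsAcyclic) {a b : V} {e : Sym2 V} {S : Set (Sym2 V)}
    (p : G.Walk a b) (hp : p.IsPath) (he : e ∈ p.edges) (heS : e ∈ S) :
    ¬ (G.deleteEdges S).Reachable a b := by
  intro h
  obtain ⟨q, hq, hqS⟩ := exists_path_avoiding h
  have : (⟨q, hq⟩ : G.Path a b) = ⟨p, hp⟩ := hG.path_unique _ _
  have hpq : q = p := congrArg Subtype.val this
  exact hqS e (hpq ▸ he) heS

lemma reach_mono {S S' : Set (Sym2 V)} (h : S ⊆ S') {a b : V} :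
    (G.deleteEdges S').Reachable a b → (G.deleteEdges S).Reachable a b :=
  Reachable.mono (deleteEdges_anti h)

lemma mem_support_reachable {Γ : SimpleGraph V} {a b x : V} (p : Γ.Walk a b)
    (hx : x ∈ p.support) : Γ.Reachable a x := ⟨p.takeUntil x hx⟩

lemma reachable_deleteEdges_union {S S' : Set (Sym2 V)} {a b : V}
    (h : (G.deleteEdges S).Reachable a b)
    (hS' : ∀ e ∈ S', ∀ x, x ∈ e → ¬ (G.deleteEdges S).Reachable a x) :
    (G.deleteEdges (S ∪ S')).Reachable a b := by
  obtain ⟨p, _, hpS⟩ := exists_path_avoiding h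
  refine reachable_of_walk_avoiding p ?_
  intro e he
  rintro (heS | heS')
  · exact hpS e he heS
  · induction e with
    | h x y =>
      have hx : x ∈ p.support := p.fst_mem_support_of_mem_edges he
      have : G.Reachable a x := mem_support_reachable p hx
      refine hS' _ heS' x (by simp) ?_
      have hpx : ∀ e' ∈ (p.takeUntil x hx).edges, e' ∉ S := fun e' he' =>
        hpS e' (p.edges_takeUntil_subset hx he')
      exact reachable_of_walk_avoiding _ hpx

/-- first hit of the support of a walk `q`, reachable without using `F` or edges of `q`. -/
lemma exists_first_hit {S : Set (Sym2 V)} {a b : V} (p : G.Walk a b)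
    (hpS : ∀ e ∈ p.edges, e ∉ S) {α β : V} (q : G.Walk α β) (hb : b ∈ q.support) :
    ∃ m ∈ q.support, (G.deleteEdges (S ∪ {e | e ∈ q.edges})).Reachable a m := by
  induction p with
  | nil => exact ⟨_, hb, Reachable.refl _⟩
  | @cons a x b h' p ih =>
    by_cases ha : a ∈ q.support
    · exact ⟨a, ha, Reachable.refl _⟩
    · obtain ⟨m, hm, hr⟩ := ih (fun e he => hpS e (List.mem_cons_of_mem _ he)) hb
      refine ⟨m, hm, Reachable.trans ⟨Walk.cons ?_ Walk.nil⟩ hr⟩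
      rw [SimpleGraph.deleteEdges_adj]
      refine ⟨h', ?_⟩
      rintro (hS | hq)
      · exact hpS _ (by simp) hS
      · exact ha (q.fst_mem_support_of_mem_edges hq)

/-- a vertex all of whose incident edges are deleted is isolated. -/
lemma reachable_isolated {S : Set (Sym2 V)} {v b : V}
    (hleaf : ∀ e ∈ G.edgeSet, v ∈ e → e ∈ S)
    (h : (G.deleteEdges S).Reachable v b) : b = v := by
  obtain ⟨p⟩ := h
  cases p with
  | nil => rfl
  | cons h' q =>
    rw [SimpleGraph.deleteEdges_adj] at h'
    exact absurd (hleaf _ h'.1 (by simp)) h'.2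

/-- a path between two non-`v` vertices avoids a leaf `v`. -/
lemma leaf_not_mem_path_support {Γ : SimpleGraph V} {v u a b : V}
    (hleaf : ∀ e ∈ Γ.edgeSet, v ∈ e → e = s(u, v)) {p : Γ.Walk a b}
    (hp : p.IsPath) (ha : a ≠ v) (hb : b ≠ v) : v ∉ p.support := by
  induction p with
  | nil => simpa using Ne.symm ha
  | @cons a x b h' q ih =>
    rw [Walk.support_cons, List.mem_cons]
    rintro (rfl | hvq)
    · exact ha rfl
    by_cases hx : x = v
    case neg => exact ih hp.of_cons hx hb hvq
    · -- x = v : derive a contradiction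
      have he : s(a, x) = s(u, v) := hleaf _ h' (by rw [hx]; simp)
      have hau : a = u := by
        rw [Sym2.eq_iff] at he
        rcases he with ⟨h1, _⟩ | ⟨h1, _⟩
        · exact h1
        · exact absurd h1 ha
      cases q with
      | nil => exact hb hx
      | @cons x y b h2 q2 =>
        have he2 : s(x, y) = s(u, v) := hleaf _ h2 (by rw [hx]; simp)
        have hyu : y = u := by
          rw [Sym2.eq_iff] at he2
          rcases he2 with ⟨h1, h2'⟩ | ⟨h1, h2'⟩
          · exact absurd (h1.trans hau.symm) (Γ.ne_of_adj h').symm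
          · exact h2'
        rw [Walk.cons_isPath_iff] at hp
        exact hp.2 (by
          rw [Walk.support_cons, List.mem_cons]
          exact Or.inr (by rw [hau, ← hyu]; exact q2.start_mem_support))

lemma IsAcyclic.anti {G H : SimpleGraph V} (h : G ≤ H) (hH : H.IsAcyclic) : G.IsAcyclic :=
  fun _ c hc => hH (c.mapLe h) (hc.mapLe h)

/-- The per-component condition of `IsDismembering`. -/
def Good (G : SimpleGraph V) (X : Set V) (F : Finset (Sym2 V))
    (c : (G.deleteEdges (F : Set (Sym2 V))).ConnectedComponent) : Prop :=
  (c.supp ∩ (X ∪ edgeVerts F)).Subsingleton ∨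
    (c.supp ∩ X = ∅ ∧
      ∃ a b : V, a ≠ b ∧ c.supp ∩ edgeVerts F = {a, b} ∧
        (F.filter fun e => a ∈ e).card = 1 ∧
        (F.filter fun e => b ∈ e).card = 1)

lemma isDismembering_iff {G : SimpleGraph V} {X : Set V} {F : Finset (Sym2 V)} :
    IsDismembering G X F ↔ ∀ c, Good G X F c := Iff.rfl

/-- Transfer goodness between components of two graphs whose relevant
reachability and marks agree. -/
lemma good_transfer {G₁ G₂ : SimpleGraph V} {X₁ X₂ : Set V} {F₁ F₂ : Finset (Sym2 V)}
    {x₁ x₂ : V}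
    (h1 : ∀ y, y ∈ X₁ ∪ edgeVerts F₁ ∪ X₂ ∪ edgeVerts F₂ →
      ((G₁.deleteEdges (F₁ : Set (Sym2 V))).Reachable x₁ y ↔
        (G₂.deleteEdges (F₂ : Set (Sym2 V))).Reachable x₂ y))
    (h2 : ∀ y, (G₁.deleteEdges (F₁ : Set (Sym2 V))).Reachable x₁ y →
      ((y ∈ X₁ ↔ y ∈ X₂) ∧ (y ∈ edgeVerts F₁ ↔ y ∈ edgeVerts F₂) ∧
        (F₁.filter fun e => y ∈ e).card = (F₂.filter fun e => y ∈ e).card))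
    (hg : Good G₁ X₁ F₁ ((G₁.deleteEdges (F₁ : Set (Sym2 V))).connectedComponentMk x₁)) :
    Good G₂ X₂ F₂ ((G₂.deleteEdges (F₂ : Set (Sym2 V))).connectedComponentMk x₂) := by
  have hXF : ((G₂.deleteEdges (F₂ : Set (Sym2 V))).connectedComponentMk x₂).supp ∩ (X₂ ∪ edgeVerts F₂)
      = ((G₁.deleteEdges (F₁ : Set (Sym2 V))).connectedComponentMk x₁).supp ∩ (X₁ ∪ edgeVerts F₁) := by
    ext y
    simp only [Set.mem_inter_iff, mem_supp_mk]
    constructor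
    · rintro ⟨hr, hy⟩
      have hr1 := (h1 y (by rcases hy with h|h; exact Or.inl (Or.inr h); exact Or.inr h)).mpr hr
      obtain ⟨hX, hF, _⟩ := h2 y hr1
      refine ⟨hr1, ?_⟩
      rcases hy with h|h
      · exact Or.inl (hX.mpr h)
      · exact Or.inr (hF.mpr h)
    · rintro ⟨hr, hy⟩
      obtain ⟨hX, hF, _⟩ := h2 y hr
      have hy2 : y ∈ X₂ ∪ edgeVerts F₂ := by
        rcases hy with h|h
        · exact Or.inl (hX.mp h)
        · exact Or.inr (hF.mp h)
      exact ⟨(h1 y (by rcases hy2 with h|h; exact Or.inl (Or.inr h); exact Or.inr h)).mp hr, hy2⟩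
  have hX : ((G₂.deleteEdges (F₂ : Set (Sym2 V))).connectedComponentMk x₂).supp ∩ X₂
      = ((G₁.deleteEdges (F₁ : Set (Sym2 V))).connectedComponentMk x₁).supp ∩ X₁ := by
    ext y
    simp only [Set.mem_inter_iff, mem_supp_mk]
    constructor
    · rintro ⟨hr, hy⟩
      have hr1 := (h1 y (Or.inl (Or.inr hy))).mpr hr
      exact ⟨hr1, ((h2 y hr1).1).mpr hy⟩
    · rintro ⟨hr, hy⟩
      exact ⟨(h1 y (Or.inl (Or.inl (Or.inl hy)))).mp hr, ((h2 y hr).1).mp hy⟩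
  have hF : ((G₂.deleteEdges (F₂ : Set (Sym2 V))).connectedComponentMk x₂).supp ∩ edgeVerts F₂
      = ((G₁.deleteEdges (F₁ : Set (Sym2 V))).connectedComponentMk x₁).supp ∩ edgeVerts F₁ := by
    ext y
    simp only [Set.mem_inter_iff, mem_supp_mk]
    constructor
    · rintro ⟨hr, hy⟩
      have hr1 := (h1 y (Or.inr hy)).mpr hr
      exact ⟨hr1, ((h2 y hr1).2.1).mpr hy⟩
    · rintro ⟨hr, hy⟩
      exact ⟨(h1 y (Or.inl (Or.inl (Or.inr hy)))).mp hr, ((h2 y hr).2.1).mp hy⟩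
  rcases hg with hg | ⟨hgX, a, b, hab, hset, hca, hcb⟩
  · left; rw [hXF]; exact hg
  · right
    refine ⟨by rw [hX, hgX], a, b, hab, by rw [hF, hset], ?_, ?_⟩
    · have ha : a ∈ ((G₁.deleteEdges (F₁ : Set (Sym2 V))).connectedComponentMk x₁).supp ∩ edgeVerts F₁ := by
        rw [hset]; exact Or.inl rfl
      rw [← (h2 a (mem_supp_mk.mp ha.1)).2.2]; exact hca
    · have hb : b ∈ ((G₁.deleteEdges (F₁ : Set (Sym2 V))).connectedComponentMk x₁).supp ∩ edgeVerts F₁ := by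
        rw [hset]; exact Or.inr rfl
      rw [← (h2 b (mem_supp_mk.mp hb.1)).2.2]; exact hcb

lemma good_single {G : SimpleGraph V} {X : Set V} {F : Finset (Sym2 V)} {x a : V}
    (h : ∀ y, (G.deleteEdges (F : Set (Sym2 V))).Reachable x y → y ∈ X ∪ edgeVerts F → y = a) :
    Good G X F ((G.deleteEdges (F : Set (Sym2 V))).connectedComponentMk x) := by
  left
  intro y hy z hz
  rw [Set.mem_inter_iff, mem_supp_mk] at hy hz
  rw [h y hy.1 hy.2, h z hz.1 hz.2]

lemma good_pair {G : SimpleGraph V} {X : Set V} {F : Finset (Sym2 V)} {x a b : V}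
    (hsub : ∀ y, (G.deleteEdges (F : Set (Sym2 V))).Reachable x y → y ∈ X ∪ edgeVerts F → y = a ∨ y = b)
    (hX : ∀ y, (G.deleteEdges (F : Set (Sym2 V))).Reachable x y → y ∉ X)
    (haF : a ∈ edgeVerts F) (hbF : b ∈ edgeVerts F) (hab : a ≠ b)
    (hca : (F.filter fun e => a ∈ e).card = 1) (hcb : (F.filter fun e => b ∈ e).card = 1) :
    Good G X F ((G.deleteEdges (F : Set (Sym2 V))).connectedComponentMk x) := by
  classical
  by_cases hra : (G.deleteEdges (F : Set (Sym2 V))).Reachable x a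
  · by_cases hrb : (G.deleteEdges (F : Set (Sym2 V))).Reachable x b
    · right
      refine ⟨?_, a, b, hab, ?_, hca, hcb⟩
      · ext y
        simp only [Set.mem_inter_iff, mem_supp_mk, Set.mem_empty_iff_false, iff_false, not_and]
        intro hr
        exact hX y hr
      · ext y
        simp only [Set.mem_inter_iff, mem_supp_mk]
        constructor
        · rintro ⟨hr, hy⟩
          rcases hsub y hr (Or.inr hy) with rfl | rfl
          · exact Or.inl rfl
          · exact Or.inr rfl
        · rintro (rfl | rfl)
          · exact ⟨hra, haF⟩
          · exact ⟨hrb, hbF⟩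
    · apply good_single (a := a)
      intro y hy hy2
      rcases hsub y hy hy2 with rfl | rfl
      · rfl
      · exact absurd hy hrb
  · apply good_single (a := b)
    intro y hy hy2
    rcases hsub y hy hy2 with rfl | rfl
    · exact absurd hy hra
    · rfl

lemma mem_edgeVerts_insert {e : Sym2 V} {F : Finset (Sym2 V)} {v : V} :
    v ∈ edgeVerts (insert e F) ↔ v ∈ e ∨ v ∈ edgeVerts F := by
  constructor
  · rintro ⟨f, hf, hv⟩
    rcases Finset.mem_insert.mp hf with rfl | hf
    · exact Or.inl hv
    · exact Or.inr ⟨f, hf, hv⟩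
  · rintro (hv | ⟨f, hf, hv⟩)
    · exact ⟨e, Finset.mem_insert_self _ _, hv⟩
    · exact ⟨f, Finset.mem_insert_of_mem hf, hv⟩

section Restore

variable {G : SimpleGraph V} {X : Set V} {F : Finset (Sym2 V)}

/-- The restore surgery when the hit vertex is the endpoint `α` of the path. -/
lemma split1 (hG : G.IsAcyclic) (hFE : (F : Set (Sym2 V)) ⊆ G.edgeSet)
    (hdis : IsDismembering G X F) {r α β : V} (hab : α ≠ β)
    (hrα : (G.deleteEdges (F : Set (Sym2 V))).Reachable r α)
    (hX0 : (((G.deleteEdges (F : Set (Sym2 V))).connectedComponentMk r).supp ∩ X) = ∅)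
    (hset : (((G.deleteEdges (F : Set (Sym2 V))).connectedComponentMk r).supp ∩ edgeVerts F) = {α, β})
    (hcβ : (F.filter fun e => β ∈ e).card = 1)
    (p : G.Walk α β) (hp : p.IsPath) (hpF : ∀ e ∈ p.edges, e ∉ (F : Set (Sym2 V)))
    (hrm : (G.deleteEdges ((F : Set (Sym2 V)) ∪ {e | e ∈ p.edges})).Reachable r α) :
    ∃ F' : Finset (Sym2 V), F ⊆ F' ∧ (F' : Set (Sym2 V)) ⊆ G.edgeSet ∧ F'.card ≤ F.card + 2 ∧
      IsDismembering G X F' ∧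
      ((((G.deleteEdges (F' : Set (Sym2 V))).connectedComponentMk r).supp ∩ (X ∪ edgeVerts F'))).Subsingleton := by
  classical
  cases p with
  | nil => exact absurd rfl hab
  | @cons _ c _ h q0 =>
    set K : SimpleGraph V := G.deleteEdges (F : Set (Sym2 V)) with hK
    have hXr : ∀ y, K.Reachable r y → y ∉ X := by
      intro y hy hyX
      have : y ∈ (K.connectedComponentMk r).supp ∩ X := ⟨mem_supp_mk.mpr hy, hyX⟩
      rw [hX0] at this
      exact this
    have hVr : ∀ y, K.Reachable r y → y ∈ edgeVerts F → y = α ∨ y = β := by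
      intro y hy hyV
      have : y ∈ ({α, β} : Set V) := hset ▸ ⟨mem_supp_mk.mpr hy, hyV⟩
      simpa using this
    have hβV : β ∈ edgeVerts F := by
      have : β ∈ ({α, β} : Set V) := by simp
      rw [← hset] at this
      exact this.2
    have hαc : α ≠ c := h.ne
    have he₀p : s(α, c) ∈ (Walk.cons h q0).edges := by simp
    have he₀F : s(α, c) ∉ F := fun hf => hpF _ he₀p hf
    have he₀E : s(α, c) ∈ G.edgeSet := h
    have hrc : K.Reachable r c := by
      refine hrα.trans ⟨Walk.cons ?_ Walk.nil⟩
      rw [hK, SimpleGraph.deleteEdges_adj]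
      exact ⟨h, he₀F⟩
    -- the new set of cut edges
    set F' : Finset (Sym2 V) := insert s(α, c) F with hF'
    have hcoe : (F' : Set (Sym2 V)) = insert s(α, c) (F : Set (Sym2 V)) := by
      rw [hF', Finset.coe_insert]
    set K' : SimpleGraph V := G.deleteEdges (F' : Set (Sym2 V)) with hK'
    have hmono : ∀ x y, K'.Reachable x y → K.Reachable x y := by
      intro x y
      rw [hK, hK', hcoe]
      exact reach_mono (Set.subset_insert _ _)
    have hsubpE : (F' : Set (Sym2 V)) ⊆ (F : Set (Sym2 V)) ∪ {e | e ∈ (Walk.cons h q0).edges} := by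
      rw [hcoe]
      rintro e he
      rcases Set.mem_insert_iff.mp he with rfl | he
      · exact Or.inr he₀p
      · exact Or.inl he
    have he₀F' : s(α, c) ∈ (F' : Set (Sym2 V)) := by rw [hcoe]; exact Set.mem_insert _ _
    have N1 : ¬ K'.Reachable α β :=
      not_reachable_deleteEdges hG (Walk.cons h q0) hp he₀p he₀F'
    have N2 : ¬ K'.Reachable α c := by
      refine not_reachable_deleteEdges hG (Walk.cons h Walk.nil) ?_ (by simp) he₀F'
      simp [Walk.cons_isPath_iff, hαc]
    have P1 : K'.Reachable c β := by
      refine reachable_of_walk_avoiding q0 ?_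
      intro e he
      rw [hcoe]
      rintro (rfl | hf)
      · have := hp.edges_nodup
        rw [Walk.edges_cons, List.nodup_cons] at this
        exact this.1 he
      · exact hpF e (by rw [Walk.edges_cons]; exact List.mem_cons_of_mem _ he) hf
    have P2 : K'.Reachable r α := by
      rw [hK']
      exact reach_mono hsubpE hrm
    have hmark : ∀ x', K.Reachable x' r → ∀ y, K'.Reachable x' y →
        y ∈ X ∪ edgeVerts F' → y = α ∨ y = β ∨ y = c := by
      intro x' hx'r y hy hyM
      have hKy : K.Reachable r y := hx'r.symm.trans (hmono _ _ hy)
      rcases hyM with hyX | hyV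
      · exact absurd hyX (hXr y hKy)
      · rw [hF', mem_edgeVerts_insert] at hyV
        rcases hyV with hy0 | hyV
        · rw [Sym2.mem_iff] at hy0
          rcases hy0 with rfl | rfl
          · exact Or.inl rfl
          · exact Or.inr (Or.inr rfl)
        · rcases hVr y hKy hyV with rfl | rfl
          · exact Or.inl rfl
          · exact Or.inr (Or.inl rfl)
    have hXr' : ∀ x', K.Reachable x' r → ∀ y, K'.Reachable x' y → y ∉ X := by
      intro x' hx'r y hy
      exact hXr y (hx'r.symm.trans (hmono _ _ hy))
    have hzone : ∀ x', K.Reachable x' r → Good G X F' (K'.connectedComponentMk x') := by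
      intro x' hx'r
      by_cases hRα : K'.Reachable x' α
      · apply good_single (a := α)
        intro y hy hyM
        rcases hmark x' hx'r y hy hyM with rfl | rfl | rfl
        · rfl
        · exact absurd (hRα.symm.trans hy) N1
        · exact absurd (hRα.symm.trans hy) N2
      · by_cases hcb : c = β
        · apply good_single (a := β)
          intro y hy hyM
          rcases hmark x' hx'r y hy hyM with rfl | rfl | rfl
          · exact absurd hy hRα
          · rfl
          · exact hcb
        · have hcF : F.filter (fun e => c ∈ e) = ∅ := by
            rw [Finset.filter_eq_empty_iff]
            intro f hf hcf
            rcases hVr c hrc ⟨f, hf, hcf⟩ with rfl | rfl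
            · exact hαc rfl
            · exact hcb rfl
          apply good_pair (a := c) (b := β)
          · intro y hy hyM
            rcases hmark x' hx'r y hy hyM with rfl | rfl | rfl
            · exact absurd hy hRα
            · exact Or.inr rfl
            · exact Or.inl rfl
          · exact hXr' x' hx'r
          · rw [hF', mem_edgeVerts_insert]
            exact Or.inl (by simp)
          · rw [hF', mem_edgeVerts_insert]
            exact Or.inr hβV
          · exact hcb
          · rw [hF', Finset.filter_insert, if_pos (by simp), hcF]
            simp
          · rw [hF', Finset.filter_insert, if_neg, hcβ]
            rw [Sym2.mem_iff]
            rintro (rfl | rfl)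
            · exact hab rfl
            · exact hcb rfl
    have htrans : ∀ x', ¬ K.Reachable x' r → Good G X F' (K'.connectedComponentMk x') := by
      intro x' hx'r
      have hnα : ¬ K.Reachable x' α := fun hh => hx'r (hh.trans hrα.symm)
      have hnc : ¬ K.Reachable x' c := fun hh => hx'r (hh.trans hrc.symm)
      refine good_transfer (G₁ := G) (X₁ := X) (F₁ := F) (x₁ := x') ?_ ?_ (hdis _)
      · intro y _
        constructor
        · intro hxy
          have hst : (G.deleteEdges ((F : Set (Sym2 V)) ∪ {s(α, c)})).Reachable x' y := by
            refine reachable_deleteEdges_union hxy ?_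
            rintro e he z hz
            rw [Set.mem_singleton_iff] at he
            subst he
            rw [Sym2.mem_iff] at hz
            rcases hz with rfl | rfl
            · exact hnα
            · exact hnc
          rw [hcoe, ← Set.union_singleton]
          exact hst
        · exact fun hxy => hmono _ _ hxy
      · intro y hxy
        have hyα : y ≠ α := fun hh => hnα (hh ▸ hxy)
        have hyc : y ≠ c := fun hh => hnc (hh ▸ hxy)
        refine ⟨Iff.rfl, ?_, ?_⟩
        · rw [hF', mem_edgeVerts_insert]
          constructor
          · exact Or.inr
          · rintro (hy0 | hy0)
            · rw [Sym2.mem_iff] at hy0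
              rcases hy0 with rfl | rfl
              · exact absurd rfl hyα
              · exact absurd rfl hyc
            · exact hy0
        · rw [hF', Finset.filter_insert, if_neg]
          rw [Sym2.mem_iff]
          rintro (rfl | rfl)
          · exact hyα rfl
          · exact hyc rfl
    have hone : ∀ y, K'.Reachable r y → y ∈ X ∪ edgeVerts F' → y = α := by
      intro y hy hyM
      rcases hmark r (Reachable.refl r) y hy hyM with rfl | rfl | rfl
      · rfl
      · exact absurd (P2.symm.trans hy) N1
      · exact absurd (P2.symm.trans hy) N2
    refine ⟨F', Finset.subset_insert _ _, ?_, ?_, ?_, ?_⟩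
    · rw [hcoe]
      rintro e he
      rcases Set.mem_insert_iff.mp he with rfl | he
      · exact he₀E
      · exact hFE he
    · rw [hF', Finset.card_insert_of_notMem he₀F]
      omega
    · intro cc
      obtain ⟨x', rfl⟩ := cc.exists_rep
      by_cases hx'r : K.Reachable x' r
      · exact hzone x' hx'r
      · exact htrans x' hx'r
    · intro y hy z hz
      rw [Set.mem_inter_iff, mem_supp_mk] at hy hz
      rw [hone y hy.1 hy.2, hone z hz.1 hz.2]

lemma good_of_sub {G : SimpleGraph V} {X : Set V} {F : Finset (Sym2 V)} {x : V}
    (h : (((G.deleteEdges (F : Set (Sym2 V))).connectedComponentMk x).supp ∩ (X ∪ edgeVerts F)).Subsingleton) :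
    Good G X F ((G.deleteEdges (F : Set (Sym2 V))).connectedComponentMk x) := Or.inl h

/-- The restore surgery when the hit vertex `m` is interior to the path. -/
lemma split2 (hG : G.IsAcyclic) (hFE : (F : Set (Sym2 V)) ⊆ G.edgeSet)
    (hdis : IsDismembering G X F) {r α β m : V} (hab : α ≠ β)
    (hrα : (G.deleteEdges (F : Set (Sym2 V))).Reachable r α)
    (hX0 : (((G.deleteEdges (F : Set (Sym2 V))).connectedComponentMk r).supp ∩ X) = ∅)
    (hset : (((G.deleteEdges (F : Set (Sym2 V))).connectedComponentMk r).supp ∩ edgeVerts F) = {α, β})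
    (hcα : (F.filter fun e => α ∈ e).card = 1)
    (hcβ : (F.filter fun e => β ∈ e).card = 1)
    (p : G.Walk α β) (hp : p.IsPath) (hpF : ∀ e ∈ p.edges, e ∉ (F : Set (Sym2 V)))
    (hm : m ∈ p.support) (hmα : m ≠ α) (hmβ : m ≠ β)
    (hrm : (G.deleteEdges ((F : Set (Sym2 V)) ∪ {e | e ∈ p.edges})).Reachable r m) :
    ∃ F' : Finset (Sym2 V), F ⊆ F' ∧ (F' : Set (Sym2 V)) ⊆ G.edgeSet ∧ F'.card ≤ F.card + 2 ∧
      IsDismembering G X F' ∧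
      ((((G.deleteEdges (F' : Set (Sym2 V))).connectedComponentMk r).supp ∩ (X ∪ edgeVerts F'))).Subsingleton := by
  classical
  set K : SimpleGraph V := G.deleteEdges (F : Set (Sym2 V)) with hK
  have hXr : ∀ y, K.Reachable r y → y ∉ X := by
    intro y hy hyX
    have : y ∈ (K.connectedComponentMk r).supp ∩ X := ⟨mem_supp_mk.mpr hy, hyX⟩
    rw [hX0] at this
    exact this
  have hVr : ∀ y, K.Reachable r y → y ∈ edgeVerts F → y = α ∨ y = β := by
    intro y hy hyV
    have : y ∈ ({α, β} : Set V) := hset ▸ ⟨mem_supp_mk.mpr hy, hyV⟩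
    simpa using this
  have hαV : α ∈ edgeVerts F := by
    have : α ∈ ({α, β} : Set V) := by simp
    rw [← hset] at this
    exact this.2
  have hβV : β ∈ edgeVerts F := by
    have : β ∈ ({α, β} : Set V) := by simp
    rw [← hset] at this
    exact this.2
  have hrβ : K.Reachable r β := by
    have : β ∈ ({α, β} : Set V) := by simp
    rw [← hset] at this
    exact mem_supp_mk.mp this.1
  -- split the path at m
  set p₁ : G.Walk α m := p.takeUntil m hm with hp₁def
  set p₂ : G.Walk m β := p.dropUntil m hm with hp₂def
  have hspec : p₁.append p₂ = p := p.take_spec hm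
  have hp₁ : p₁.IsPath := hp.takeUntil hm
  have hp₂ : p₂.IsPath := hp.dropUntil hm
  have hsupp : p.support = p₁.support ++ p₂.support.tail := by
    rw [← hspec, Walk.support_append]
  have hdisj : ∀ y, y ∈ p₁.support → y ∈ p₂.support.tail → False := by
    have := hp.support_nodup
    rw [hsupp] at this
    exact fun y h1 h2 => List.disjoint_of_nodup_append this h1 h2
  have hedges : p.edges = p₁.edges ++ p₂.edges := by
    rw [← hspec, Walk.edges_append]
  have hednd : (p₁.edges ++ p₂.edges).Nodup := by
    rw [← hedges]; exact hp.edges_nodup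
  have hedisj : ∀ e, e ∈ p₁.edges → e ∈ p₂.edges → False :=
    fun e h1 h2 => List.disjoint_of_nodup_append hednd h1 h2
  -- decompose the two halves
  obtain ⟨cβ, h2, t2, hp2eq⟩ := (Walk.not_nil_iff (p := p₂)).mp (Walk.not_nil_of_ne hmβ)
  obtain ⟨cα, h1, t1, hp1eq⟩ := (Walk.not_nil_iff (p := p₁.reverse)).mp (Walk.not_nil_of_ne hmα)
  have hcαp₁ : cα ∈ p₁.support := by
    have : cα ∈ p₁.reverse.support := by
      rw [hp1eq, Walk.support_cons]
      exact List.mem_cons_of_mem _ t1.start_mem_support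
    rwa [Walk.support_reverse, List.mem_reverse] at this
  have hcβt : cβ ∈ p₂.support.tail := by
    rw [hp2eq, Walk.support_cons]
    exact t2.start_mem_support
  have hβt : β ∈ p₂.support.tail := by
    have h3 := p₂.end_mem_support
    rw [p₂.support_eq_cons, List.mem_cons] at h3
    rcases h3 with h3 | h3
    · exact absurd h3.symm hmβ
    · exact h3
  have hαp₁ : α ∈ p₁.support := p₁.start_mem_support
  have hmcα : m ≠ cα := h1.ne
  have hmcβ : m ≠ cβ := h2.ne
  have hcαβ : cα ≠ β := fun hh => hdisj cα hcαp₁ (hh ▸ hβt)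
  have hcβα : cβ ≠ α := fun hh => hdisj α hαp₁ (hh ▸ hcβt)
  have hcαcβ : cα ≠ cβ := fun hh => hdisj cα hcαp₁ (hh ▸ hcβt)
  have hαm : α ≠ m := Ne.symm hmα
  -- the two cut edges
  have he1p₁ : s(m, cα) ∈ p₁.edges := by
    have : s(m, cα) ∈ p₁.reverse.edges := by
      rw [hp1eq, Walk.edges_cons]
      exact List.mem_cons_self
    rwa [Walk.edges_reverse, List.mem_reverse] at this
  have he2p₂ : s(m, cβ) ∈ p₂.edges := by
    rw [hp2eq, Walk.edges_cons]
    exact List.mem_cons_self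
  have he1p : s(m, cα) ∈ p.edges := by rw [hedges]; exact List.mem_append_left _ he1p₁
  have he2p : s(m, cβ) ∈ p.edges := by rw [hedges]; exact List.mem_append_right _ he2p₂
  have he1F : s(m, cα) ∉ F := fun hf => hpF _ he1p hf
  have he2F : s(m, cβ) ∉ F := fun hf => hpF _ he2p hf
  have he1e2 : s(m, cα) ≠ s(m, cβ) := by
    intro hh
    rw [Sym2.eq_iff] at hh
    rcases hh with ⟨-, h'⟩ | ⟨h', -⟩
    · exact hcαcβ h'
    · exact hmcβ h'
  set F' : Finset (Sym2 V) := insert s(m, cα) (insert s(m, cβ) F) with hF'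
  have hcoe : (F' : Set (Sym2 V)) = insert s(m, cα) (insert s(m, cβ) (F : Set (Sym2 V))) := by
    rw [hF', Finset.coe_insert, Finset.coe_insert]
  set K' : SimpleGraph V := G.deleteEdges (F' : Set (Sym2 V)) with hK'
  have hFF' : (F : Set (Sym2 V)) ⊆ (F' : Set (Sym2 V)) := by
    rw [hcoe]
    exact (Set.subset_insert _ _).trans (Set.subset_insert _ _) |>.trans (by rfl) |>.trans (by rfl)
  have hmono : ∀ x y, K'.Reachable x y → K.Reachable x y := by
    intro x y
    rw [hK, hK']
    exact reach_mono hFF'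
  have hsubpE : (F' : Set (Sym2 V)) ⊆ (F : Set (Sym2 V)) ∪ {e | e ∈ p.edges} := by
    rw [hcoe]
    rintro e he
    rcases Set.mem_insert_iff.mp he with rfl | he
    · exact Or.inr he1p
    · rcases Set.mem_insert_iff.mp he with rfl | he
      · exact Or.inr he2p
      · exact Or.inl he
  have he1F' : s(m, cα) ∈ (F' : Set (Sym2 V)) := by rw [hcoe]; exact Set.mem_insert _ _
  have he2F' : s(m, cβ) ∈ (F' : Set (Sym2 V)) := by
    rw [hcoe]
    exact Set.mem_insert_of_mem _ (Set.mem_insert _ _)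
  have Nαβ : ¬ K'.Reachable α β := not_reachable_deleteEdges hG p hp he1p he1F'
  have Nαm : ¬ K'.Reachable α m := not_reachable_deleteEdges hG p₁ hp₁ he1p₁ he1F'
  have Nαcβ : ¬ K'.Reachable α cβ := by
    have hwp : (p₁.concat h2).IsPath := by
      rw [← Walk.isPath_reverse_iff, Walk.reverse_concat, Walk.cons_isPath_iff]
      refine ⟨hp₁.reverse, ?_⟩
      rw [Walk.support_reverse, List.mem_reverse]
      exact fun hc => hdisj cβ hc hcβt
    refine not_reachable_deleteEdges hG (p₁.concat h2) hwp ?_ he2F'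
    rw [Walk.edges_concat]
    simp
  have Ncαm : ¬ K'.Reachable cα m := by
    refine not_reachable_deleteEdges hG (Walk.cons h1.symm Walk.nil) ?_ ?_ he1F'
    · simp [Walk.cons_isPath_iff, Ne.symm hmcα]
    · simp [Sym2.eq_swap]
  have Ncαβ : ¬ K'.Reachable cα β := by
    have hwp : (Walk.cons h1.symm p₂).IsPath := by
      rw [Walk.cons_isPath_iff]
      refine ⟨hp₂, ?_⟩
      rw [p₂.support_eq_cons, List.mem_cons]
      rintro (hc | hc)
      · exact hmcα hc.symm
      · exact hdisj cα hcαp₁ hc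
    refine not_reachable_deleteEdges hG (Walk.cons h1.symm p₂) hwp ?_ he1F'
    rw [Walk.edges_cons]
    exact List.mem_cons.mpr (Or.inl Sym2.eq_swap)
  have Ncαcβ : ¬ K'.Reachable cα cβ := by
    refine not_reachable_deleteEdges hG (Walk.cons h1.symm (Walk.cons h2 Walk.nil)) ?_ ?_ he1F'
    · simp [Walk.cons_isPath_iff, Ne.symm hmcα, hcαcβ, hmcβ]
    · simp [Sym2.eq_swap]
  have Nmβ : ¬ K'.Reachable m β := not_reachable_deleteEdges hG p₂ hp₂ he2p₂ he2F'
  have Nmcβ : ¬ K'.Reachable m cβ := by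
    refine not_reachable_deleteEdges hG (Walk.cons h2 Walk.nil) ?_ (by simp) he2F'
    simp [Walk.cons_isPath_iff, hmcβ]
  have Prm : K'.Reachable r m := by
    rw [hK']
    exact reach_mono hsubpE hrm
  have Pcαα : K'.Reachable cα α := by
    refine reachable_of_walk_avoiding t1 ?_
    intro e he hef
    have het1 : e ∈ p₁.edges := by
      have : e ∈ p₁.reverse.edges := by
        rw [hp1eq, Walk.edges_cons]
        exact List.mem_cons_of_mem _ he
      rwa [Walk.edges_reverse, List.mem_reverse] at this
    rw [hcoe] at hef
    rcases Set.mem_insert_iff.mp hef with rfl | hef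
    · have hnd : (p₁.reverse).IsPath := hp₁.reverse
      have := hnd.edges_nodup
      rw [hp1eq, Walk.edges_cons, List.nodup_cons] at this
      exact this.1 he
    · rcases Set.mem_insert_iff.mp hef with rfl | hef
      · exact hedisj _ het1 he2p₂
      · exact hpF e (by rw [hedges]; exact List.mem_append_left _ het1) hef
  have Pcββ : K'.Reachable cβ β := by
    refine reachable_of_walk_avoiding t2 ?_
    intro e he hef
    have het2 : e ∈ p₂.edges := by
      rw [hp2eq, Walk.edges_cons]
      exact List.mem_cons_of_mem _ he
    rw [hcoe] at hef
    rcases Set.mem_insert_iff.mp hef with rfl | hef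
    · exact hedisj _ he1p₁ het2
    · rcases Set.mem_insert_iff.mp hef with rfl | hef
      · have := hp₂.edges_nodup
        rw [hp2eq, Walk.edges_cons, List.nodup_cons] at this
        exact this.1 he
      · exact hpF e (by rw [hedges]; exact List.mem_append_right _ het2) hef
  have hKrm : K.Reachable r m := by
    rw [hK]
    exact reach_mono Set.subset_union_left hrm
  have hKcαα : K.Reachable cα α := by
    refine reachable_of_walk_avoiding t1 ?_
    intro e he
    have het1 : e ∈ p₁.edges := by
      have : e ∈ p₁.reverse.edges := by
        rw [hp1eq, Walk.edges_cons]
        exact List.mem_cons_of_mem _ he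
      rwa [Walk.edges_reverse, List.mem_reverse] at this
    exact hpF e (by rw [hedges]; exact List.mem_append_left _ het1)
  have hKrcα : K.Reachable r cα := hrα.trans hKcαα.symm
  have hKrcβ : K.Reachable r cβ := by
    refine hKrm.trans ⟨Walk.cons ?_ Walk.nil⟩
    rw [hK, SimpleGraph.deleteEdges_adj]
    exact ⟨h2, he2F⟩
  have hmark : ∀ x', K.Reachable x' r → ∀ y, K'.Reachable x' y →
      y ∈ X ∪ edgeVerts F' → y = α ∨ y = β ∨ y = m ∨ y = cα ∨ y = cβ := by
    intro x' hx'r y hy hyM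
    have hKy : K.Reachable r y := hx'r.symm.trans (hmono _ _ hy)
    rcases hyM with hyX | hyV
    · exact absurd hyX (hXr y hKy)
    · rw [hF', mem_edgeVerts_insert, mem_edgeVerts_insert] at hyV
      rcases hyV with hy0 | hy0 | hyV
      · rw [Sym2.mem_iff] at hy0
        rcases hy0 with rfl | rfl
        · exact Or.inr (Or.inr (Or.inl rfl))
        · exact Or.inr (Or.inr (Or.inr (Or.inl rfl)))
      · rw [Sym2.mem_iff] at hy0
        rcases hy0 with rfl | rfl
        · exact Or.inr (Or.inr (Or.inl rfl))
        · exact Or.inr (Or.inr (Or.inr (Or.inr rfl)))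
      · rcases hVr y hKy hyV with rfl | rfl
        · exact Or.inl rfl
        · exact Or.inr (Or.inl rfl)
  have hXr' : ∀ x', K.Reachable x' r → ∀ y, K'.Reachable x' y → y ∉ X := by
    intro x' hx'r y hy
    exact hXr y (hx'r.symm.trans (hmono _ _ hy))
  -- filter computations
  have hFα : F.filter (fun e => cα ∈ e) = ∅ ∨ cα = α := by
    by_cases hcc : cα = α
    · exact Or.inr hcc
    · left
      rw [Finset.filter_eq_empty_iff]
      intro f hf hcf
      rcases hVr cα hKrcα ⟨f, hf, hcf⟩ with hh | hh
      · exact absurd hh hcc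
      · exact absurd hh hcαβ
  have hFβ : F.filter (fun e => cβ ∈ e) = ∅ ∨ cβ = β := by
    by_cases hcc : cβ = β
    · exact Or.inr hcc
    · left
      rw [Finset.filter_eq_empty_iff]
      intro f hf hcf
      rcases hVr cβ hKrcβ ⟨f, hf, hcf⟩ with hh | hh
      · exact absurd hh hcβα
      · exact absurd hh hcc
  have hzone : ∀ x', K.Reachable x' r → Good G X F' (K'.connectedComponentMk x') := by
    intro x' hx'r
    by_cases hRm : K'.Reachable x' m
    · apply good_single (a := m)
      intro y hy hyM
      rcases hmark x' hx'r y hy hyM with rfl | rfl | rfl | rfl | rfl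
      · exact absurd (hRm.symm.trans hy).symm Nαm
      · exact absurd (hRm.symm.trans hy) Nmβ
      · rfl
      · exact absurd (hRm.symm.trans hy).symm Ncαm
      · exact absurd (hRm.symm.trans hy) Nmcβ
    · by_cases hRα : K'.Reachable x' α
      · by_cases hαcα : α = cα
        · apply good_single (a := α)
          intro y hy hyM
          rcases hmark x' hx'r y hy hyM with rfl | rfl | rfl | rfl | rfl
          · rfl
          · exact absurd (hRα.symm.trans hy) Nαβ
          · exact absurd hy hRm
          · exact hαcα.symm
          · exact absurd (hRα.symm.trans hy) Nαcβ
        · apply good_pair (a := α) (b := cα)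
          · intro y hy hyM
            rcases hmark x' hx'r y hy hyM with rfl | rfl | rfl | rfl | rfl
            · exact Or.inl rfl
            · exact absurd (hRα.symm.trans hy) Nαβ
            · exact absurd hy hRm
            · exact Or.inr rfl
            · exact absurd (hRα.symm.trans hy) Nαcβ
          · exact hXr' x' hx'r
          · rw [hF', mem_edgeVerts_insert, mem_edgeVerts_insert]
            exact Or.inr (Or.inr hαV)
          · rw [hF', mem_edgeVerts_insert]
            exact Or.inl (by simp)
          · exact hαcα
          · rw [hF', Finset.filter_insert, if_neg, Finset.filter_insert, if_neg, hcα]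
            · rw [Sym2.mem_iff]
              rintro (rfl | rfl)
              · exact hmα rfl
              · exact hcβα rfl
            · rw [Sym2.mem_iff]
              rintro (rfl | rfl)
              · exact hmα rfl
              · exact hαcα rfl
          · rcases hFα with hFα | hFα
            · rw [hF', Finset.filter_insert, if_pos (by simp), Finset.filter_insert, if_neg, hFα]
              · simp
              · rw [Sym2.mem_iff]
                rintro (rfl | rfl)
                · exact hmcα rfl
                · exact hcαcβ rfl
            · exact absurd hFα.symm hαcα
      · by_cases hRβ : K'.Reachable x' β
        · by_cases hβcβ : β = cβ
          · apply good_single (a := β)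
            intro y hy hyM
            rcases hmark x' hx'r y hy hyM with rfl | rfl | rfl | rfl | rfl
            · exact absurd hy hRα
            · rfl
            · exact absurd hy hRm
            · exact absurd (hRβ.symm.trans hy).symm Ncαβ
            · exact hβcβ.symm
          · apply good_pair (a := β) (b := cβ)
            · intro y hy hyM
              rcases hmark x' hx'r y hy hyM with rfl | rfl | rfl | rfl | rfl
              · exact absurd hy hRα
              · exact Or.inl rfl
              · exact absurd hy hRm
              · exact absurd (hRβ.symm.trans hy).symm Ncαβ
              · exact Or.inr rfl
            · exact hXr' x' hx'r
            · rw [hF', mem_edgeVerts_insert, mem_edgeVerts_insert]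
              exact Or.inr (Or.inr hβV)
            · rw [hF', mem_edgeVerts_insert, mem_edgeVerts_insert]
              exact Or.inr (Or.inl (by simp))
            · exact hβcβ
            · rw [hF', Finset.filter_insert, if_neg, Finset.filter_insert, if_neg, hcβ]
              · rw [Sym2.mem_iff]
                rintro (rfl | rfl)
                · exact hmβ rfl
                · exact hβcβ rfl
              · rw [Sym2.mem_iff]
                rintro (rfl | rfl)
                · exact hmβ rfl
                · exact hcαβ rfl
            · rcases hFβ with hFβ | hFβ
              · rw [hF', Finset.filter_insert, if_neg, Finset.filter_insert, if_pos (by simp), hFβ]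
                · simp
                · rw [Sym2.mem_iff]
                  rintro (rfl | rfl)
                  · exact hmcβ rfl
                  · exact hcαcβ rfl.symm
              · exact absurd hFβ.symm hβcβ
        · apply good_of_sub
          intro y hy z hz
          rw [Set.mem_inter_iff, mem_supp_mk] at hy hz
          have hy' := hmark x' hx'r y hy.1 hy.2
          have hz' := hmark x' hx'r z hz.1 hz.2
          have hycases : y = cα ∨ y = cβ := by
            rcases hy' with rfl | rfl | rfl | rfl | rfl
            · exact absurd hy.1 hRα
            · exact absurd hy.1 hRβ
            · exact absurd hy.1 hRm
            · exact Or.inl rfl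
            · exact Or.inr rfl
          have hzcases : z = cα ∨ z = cβ := by
            rcases hz' with rfl | rfl | rfl | rfl | rfl
            · exact absurd hz.1 hRα
            · exact absurd hz.1 hRβ
            · exact absurd hz.1 hRm
            · exact Or.inl rfl
            · exact Or.inr rfl
          rcases hycases with rfl | rfl <;> rcases hzcases with rfl | rfl
          · rfl
          · exact absurd (hy.1.symm.trans hz.1) Ncαcβ
          · exact absurd (hz.1.symm.trans hy.1) Ncαcβ
          · rfl
  have htrans : ∀ x', ¬ K.Reachable x' r → Good G X F' (K'.connectedComponentMk x') := by
    intro x' hx'r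
    have hnm : ¬ K.Reachable x' m := fun hh => hx'r (hh.trans hKrm.symm)
    have hncα : ¬ K.Reachable x' cα := fun hh => hx'r (hh.trans hKrcα.symm)
    have hncβ : ¬ K.Reachable x' cβ := fun hh => hx'r (hh.trans hKrcβ.symm)
    refine good_transfer (G₁ := G) (X₁ := X) (F₁ := F) (x₁ := x') ?_ ?_ (hdis _)
    · intro y _
      constructor
      · intro hxy
        have hst : (G.deleteEdges ((F : Set (Sym2 V)) ∪ {s(m, cα), s(m, cβ)})).Reachable x' y := by
          refine reachable_deleteEdges_union hxy ?_
          rintro e he z hz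
          rcases Set.mem_insert_iff.mp he with rfl | he
          · rw [Sym2.mem_iff] at hz
            rcases hz with rfl | rfl
            · exact hnm
            · exact hncα
          · rw [Set.mem_singleton_iff] at he
            subst he
            rw [Sym2.mem_iff] at hz
            rcases hz with rfl | rfl
            · exact hnm
            · exact hncβ
        have hsetEq : (F : Set (Sym2 V)) ∪ {s(m, cα), s(m, cβ)} = (F' : Set (Sym2 V)) := by
          rw [hcoe]
          ext e
          simp only [Set.mem_union, Set.mem_insert_iff, Set.mem_singleton_iff]
          tauto
        rwa [hsetEq] at hst
      · exact fun hxy => hmono _ _ hxy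
    · intro y hxy
      have hym : y ≠ m := fun hh => hnm (hh ▸ hxy)
      have hycα : y ≠ cα := fun hh => hncα (hh ▸ hxy)
      have hycβ : y ≠ cβ := fun hh => hncβ (hh ▸ hxy)
      refine ⟨Iff.rfl, ?_, ?_⟩
      · rw [hF', mem_edgeVerts_insert, mem_edgeVerts_insert]
        constructor
        · exact fun hh => Or.inr (Or.inr hh)
        · rintro (hy0 | hy0 | hy0)
          · rw [Sym2.mem_iff] at hy0
            rcases hy0 with rfl | rfl
            · exact absurd rfl hym
            · exact absurd rfl hycα
          · rw [Sym2.mem_iff] at hy0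
            rcases hy0 with rfl | rfl
            · exact absurd rfl hym
            · exact absurd rfl hycβ
          · exact hy0
      · rw [hF', Finset.filter_insert, if_neg, Finset.filter_insert, if_neg]
        · rw [Sym2.mem_iff]
          rintro (rfl | rfl)
          · exact hym rfl
          · exact hycβ rfl
        · rw [Sym2.mem_iff]
          rintro (rfl | rfl)
          · exact hym rfl
          · exact hycα rfl
  have hone : ∀ y, K'.Reachable r y → y ∈ X ∪ edgeVerts F' → y = m := by
    intro y hy hyM
    rcases hmark r (Reachable.refl r) y hy hyM with rfl | rfl | rfl | rfl | rfl
    · exact absurd (Prm.symm.trans hy).symm Nαm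
    · exact absurd (Prm.symm.trans hy) Nmβ
    · rfl
    · exact absurd (Prm.symm.trans hy).symm Ncαm
    · exact absurd (Prm.symm.trans hy) Nmcβ
  refine ⟨F', ?_, ?_, ?_, ?_, ?_⟩
  · rw [hF']
    exact (Finset.subset_insert _ _).trans (Finset.subset_insert _ _)
  · rw [hcoe]
    rintro e he
    rcases Set.mem_insert_iff.mp he with rfl | he
    · exact h1
    · rcases Set.mem_insert_iff.mp he with rfl | he
      · exact h2
      · exact hFE he
  · have hne : s(m, cα) ∉ insert s(m, cβ) F := by
      rw [Finset.mem_insert]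
      rintro (hh | hh)
      · exact he1e2 hh
      · exact he1F hh
    rw [hF', Finset.card_insert_of_notMem hne, Finset.card_insert_of_notMem he2F]
  · intro cc
    obtain ⟨x', rfl⟩ := cc.exists_rep
    by_cases hx'r : K.Reachable x' r
    · exact hzone x' hx'r
    · exact htrans x' hx'r
  · intro y hy z hz
    rw [Set.mem_inter_iff, mem_supp_mk] at hy hz
    rw [hone y hy.1 hy.2, hone z hz.1 hz.2]

lemma restore (hG : G.IsAcyclic) (hFE : (F : Set (Sym2 V)) ⊆ G.edgeSet)
    (hdis : IsDismembering G X F) (r : V)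
    (hbad : ¬ (((G.deleteEdges (F : Set (Sym2 V))).connectedComponentMk r).supp ∩ (X ∪ edgeVerts F)).Subsingleton) :
    ∃ F' : Finset (Sym2 V), F ⊆ F' ∧ (F' : Set (Sym2 V)) ⊆ G.edgeSet ∧ F'.card ≤ F.card + 2 ∧
      IsDismembering G X F' ∧
      ((((G.deleteEdges (F' : Set (Sym2 V))).connectedComponentMk r).supp ∩ (X ∪ edgeVerts F'))).Subsingleton := by
  classical
  rcases hdis ((G.deleteEdges (F : Set (Sym2 V))).connectedComponentMk r) with hgood |
    ⟨hX0, α, β, hab, hset, hcα, hcβ⟩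
  · exact absurd hgood hbad
  have hrα : (G.deleteEdges (F : Set (Sym2 V))).Reachable r α := by
    have : α ∈ ({α, β} : Set V) := by simp
    rw [← hset] at this
    exact mem_supp_mk.mp this.1
  have hrβ : (G.deleteEdges (F : Set (Sym2 V))).Reachable r β := by
    have : β ∈ ({α, β} : Set V) := by simp
    rw [← hset] at this
    exact mem_supp_mk.mp this.1
  obtain ⟨p, hp, hpF⟩ := exists_path_avoiding (hrα.symm.trans hrβ)
  obtain ⟨q, hq, hqF⟩ := exists_path_avoiding hrα
  obtain ⟨m, hm, hrm⟩ := exists_first_hit q hqF p p.start_mem_support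
  by_cases hmα : m = α
  · subst hmα
    exact split1 hG hFE hdis hab hrα hX0 hset hcβ p hp hpF hrm
  · by_cases hmβ : m = β
    · subst hmβ
      have hset' : (((G.deleteEdges (F : Set (Sym2 V))).connectedComponentMk r).supp ∩ edgeVerts F) = {m, α} := by
        rw [hset, Set.pair_comm]
      have hpF' : ∀ e ∈ p.reverse.edges, e ∉ (F : Set (Sym2 V)) := by
        intro e he
        rw [Walk.edges_reverse, List.mem_reverse] at he
        exact hpF e he
      have hrm' : (G.deleteEdges ((F : Set (Sym2 V)) ∪ {e | e ∈ p.reverse.edges})).Reachable r m := by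
        have hsetEq : ({e | e ∈ p.reverse.edges} : Set (Sym2 V)) = {e | e ∈ p.edges} := by
          ext e
          simp [Walk.edges_reverse, List.mem_reverse]
        rw [hsetEq]
        exact hrm
      exact split1 hG hFE hdis hab.symm hrβ hX0 hset' hcα p.reverse hp.reverse hpF' hrm'
    · exact split2 hG hFE hdis hab hrα hX0 hset hcα hcβ p hp hpF hm hmα hmβ hrm

end Restore

lemma exists_leaf [Fintype V] {G : SimpleGraph V} (hG : G.IsAcyclic) {s : Finset V}
    (hconn : ∀ a ∈ s, ∀ b ∈ s, G.Reachable a b)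
    (hedge : ∀ e ∈ G.edgeSet, ∀ x, x ∈ e → x ∈ s)
    {r : V} (hr : r ∈ s) (hcard : 2 ≤ s.card) :
    ∃ v ∈ s, ∃ u, G.Adj u v ∧ v ≠ r ∧ (∀ e ∈ G.edgeSet, v ∈ e → e = s(u, v)) := by
  classical
  set L : V → ℕ := fun v => if h : G.Reachable r v then ((h.some.toPath : G.Path r v) : G.Walk r v).length else 0 with hL
  have hLval : ∀ v (p : G.Walk r v), p.IsPath → p.length = L v := by
    intro v p hp
    have hreach : G.Reachable r v := ⟨p⟩
    rw [hL]
    simp only [dif_pos hreach]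
    have h2 : p = ((hreach.some.toPath : G.Path r v) : G.Walk r v) :=
      congrArg Subtype.val (hG.path_unique ⟨p, hp⟩ (hreach.some.toPath))
    rw [h2]
  obtain ⟨v, hv, hmax⟩ := s.exists_max_image L ⟨r, hr⟩
  obtain ⟨b, hb, hbr⟩ := s.exists_mem_ne (by omega) r
  have hLb : 1 ≤ L b := by
    obtain ⟨w⟩ := hconn r hr b hb
    have hp := w.toPath.2
    have hlen := hLval b (w.toPath : G.Walk r b) hp
    rcases Nat.eq_zero_or_pos ((w.toPath : G.Walk r b)).length with h0 | h1
    · exact absurd (Walk.eq_of_length_eq_zero h0).symm hbr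
    · omega
  have hLr : L r = 0 := by
    have := hLval r Walk.nil Walk.IsPath.nil
    simpa using this.symm
  have hvr : v ≠ r := by
    intro hh
    subst hh
    have := hmax b hb
    omega
  -- v avoids every path from r to a neighbor
  have key1 : ∀ w, G.Adj v w → ∀ p : G.Walk r w, p.IsPath → v ∉ p.support := by
    intro w hw p hp hvp
    have hws : w ∈ s := hedge s(v, w) hw w (by simp)
    have hp₁ : (p.takeUntil v hvp).IsPath := hp.takeUntil hvp
    have hlen : p.length = (p.takeUntil v hvp).length + (p.dropUntil v hvp).length := by
      rw [← Walk.length_append, Walk.take_spec]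
    have hd1 : 1 ≤ (p.dropUntil v hvp).length := by
      rcases Nat.eq_zero_or_pos (p.dropUntil v hvp).length with h0 | h1
      · exact absurd (Walk.eq_of_length_eq_zero h0) hw.ne
      · omega
    have e1 := hLval w p hp
    have e2 := hLval v _ hp₁
    have := hmax w hws
    omega
  -- uniqueness of the neighbor
  have hreachv : G.Reachable r v := hconn r hr v hv
  have key2 : ∀ w₁ w₂, G.Adj v w₁ → G.Adj v w₂ → w₁ = w₂ := by
    intro w₁ w₂ hw₁ hw₂
    have hw₁s : w₁ ∈ s := hedge s(v, w₁) hw₁ w₁ (by simp)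
    have hw₂s : w₂ ∈ s := hedge s(v, w₂) hw₂ w₂ (by simp)
    obtain ⟨q₁⟩ := hconn r hr w₁ hw₁s
    obtain ⟨q₂⟩ := hconn r hr w₂ hw₂s
    set p₁ : G.Walk r w₁ := (q₁.toPath).val with hp₁def
    set p₂ : G.Walk r w₂ := (q₂.toPath).val with hp₂def
    have hp₁ : p₁.IsPath := q₁.toPath.2
    have hp₂ : p₂.IsPath := q₂.toPath.2
    have hQ₁ : (p₁.concat hw₁.symm).IsPath := by
      rw [← Walk.isPath_reverse_iff, Walk.reverse_concat, Walk.cons_isPath_iff]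
      refine ⟨hp₁.reverse, ?_⟩
      rw [Walk.support_reverse, List.mem_reverse]
      exact key1 w₁ hw₁ p₁ hp₁
    have hQ₂ : (p₂.concat hw₂.symm).IsPath := by
      rw [← Walk.isPath_reverse_iff, Walk.reverse_concat, Walk.cons_isPath_iff]
      refine ⟨hp₂.reverse, ?_⟩
      rw [Walk.support_reverse, List.mem_reverse]
      exact key1 w₂ hw₂ p₂ hp₂
    have := hG.path_unique ⟨p₁.concat hw₁.symm, hQ₁⟩ ⟨p₂.concat hw₂.symm, hQ₂⟩
    have heq : p₁.concat hw₁.symm = p₂.concat hw₂.symm := congrArg Subtype.val this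
    have hrev : (p₁.concat hw₁.symm).reverse = (p₂.concat hw₂.symm).reverse := by rw [heq]
    rw [Walk.reverse_concat, Walk.reverse_concat] at hrev
    have hsup := congrArg Walk.support hrev
    rw [Walk.support_cons, Walk.support_cons, p₁.reverse.support_eq_cons,
      p₂.reverse.support_eq_cons] at hsup
    exact (List.cons.injEq _ _ _ _).mp ((List.cons.injEq _ _ _ _).mp hsup).2 |>.1
  -- find the neighbor
  obtain ⟨q⟩ := hreachv
  set p : G.Walk r v := (q.toPath).val with hpdef
  have hp : p.IsPath := q.toPath.2
  obtain ⟨u, hadj, t, hpeq⟩ := (Walk.not_nil_iff (p := p.reverse)).mp (Walk.not_nil_of_ne hvr)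
  refine ⟨v, hv, u, hadj.symm, hvr, ?_⟩
  intro e he hve
  induction e using Sym2.ind with
  | _ x y =>
    rw [Sym2.mem_iff] at hve
    rcases hve with rfl | rfl
    · have hadjy : G.Adj v y := by simpa using he
      rw [key2 y u hadjy hadj, Sym2.eq_swap]
    · have hadjx : G.Adj v x := (by simpa using he : G.Adj x v).symm
      rw [key2 x u hadjx hadj]

section Lift

variable {G : SimpleGraph V} {u v : V} {S : Set (Sym2 V)}

/-- lift reachability from the leaf `v` to its neighbor `u`. -/
lemma lift2 (hleaf : ∀ e ∈ G.edgeSet, v ∈ e → e = s(u, v)) {y : V} (hy : y ≠ v)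
    (h : (G.deleteEdges S).Reachable v y) :
    (G.deleteEdges (S ∪ {s(u, v)})).Reachable u y := by
  obtain ⟨w⟩ := h
  have hp : (w.toPath : (G.deleteEdges S).Walk v y).IsPath := w.toPath.2
  set p : (G.deleteEdges S).Walk v y := (w.toPath).val with hpdef
  obtain ⟨z, hz, t, hpeq⟩ := (Walk.not_nil_iff (p := p)).mp (Walk.not_nil_of_ne (Ne.symm hy))
  have hzu : z = u := by
    have hze : s(v, z) ∈ G.edgeSet := by
      have := hz
      rw [SimpleGraph.deleteEdges_adj] at this
      exact this.1
    have := hleaf _ hze (by simp)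
    rw [Sym2.eq_iff] at this
    rcases this with ⟨h1, h2⟩ | ⟨h1, h2⟩
    · exact absurd h2.symm hz.ne
    · exact h2
  subst hzu
  have hvt : v ∉ t.support := by
    have := hp.support_nodup
    rw [hpeq, Walk.support_cons, List.nodup_cons] at this
    exact this.1
  refine reachable_of_walk_avoiding (t.transfer G ?_) ?_
  · intro e he
    have := t.edges_subset_edgeSet he
    rw [edgeSet_deleteEdges] at this
    exact this.1
  · intro e he
    rw [Walk.edges_transfer] at he
    rintro (heS | heuv)
    · have := t.edges_subset_edgeSet he
      rw [edgeSet_deleteEdges] at this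
      exact this.2 heS
    · rw [Set.mem_singleton_iff] at heuv
      subst heuv
      exact hvt (t.snd_mem_support_of_mem_edges he)

lemma lift1 (hleaf : ∀ e ∈ G.edgeSet, v ∈ e → e = s(u, v)) {a b : V} (ha : a ≠ v) (hb : b ≠ v) :
    (G.deleteEdges S).Reachable a b ↔ (G.deleteEdges (S ∪ {s(u, v)})).Reachable a b := by
  constructor
  · intro h
    obtain ⟨w⟩ := h
    set p : (G.deleteEdges S).Walk a b := (w.toPath).val with hpdef
    have hp : p.IsPath := w.toPath.2
    have hleaf' : ∀ e ∈ (G.deleteEdges S).edgeSet, v ∈ e → e = s(u, v) := by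
      intro e he hv
      rw [edgeSet_deleteEdges] at he
      exact hleaf e he.1 hv
    have hvp : v ∉ p.support := leaf_not_mem_path_support hleaf' hp ha hb
    refine reachable_of_walk_avoiding (p.transfer G ?_) ?_
    · intro e he
      have := p.edges_subset_edgeSet he
      rw [edgeSet_deleteEdges] at this
      exact this.1
    · intro e he
      rw [Walk.edges_transfer] at he
      rintro (heS | heuv)
      · have := p.edges_subset_edgeSet he
        rw [edgeSet_deleteEdges] at this
        exact this.2 heS
      · rw [Set.mem_singleton_iff] at heuv
        subst heuv
        exact hvp (p.snd_mem_support_of_mem_edges he)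
  · exact reach_mono Set.subset_union_left

end Lift

lemma finish_root {G : SimpleGraph V} (hG : G.IsAcyclic) {X : Set V} {F : Finset (Sym2 V)}
    (hFE : (F : Set (Sym2 V)) ⊆ G.edgeSet) (hdis : IsDismembering G X F) (r : V) {N : ℕ}
    (hcard : F.card + 2 ≤ N) :
    ∃ F' : Finset (Sym2 V), (F' : Set (Sym2 V)) ⊆ G.edgeSet ∧ F'.card ≤ N ∧
      IsDismembering G X F' ∧
      ((((G.deleteEdges (F' : Set (Sym2 V))).connectedComponentMk r).supp ∩ (X ∪ edgeVerts F'))).Subsingleton := by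
  classical
  by_cases hsub : ((((G.deleteEdges (F : Set (Sym2 V))).connectedComponentMk r).supp ∩ (X ∪ edgeVerts F))).Subsingleton
  · exact ⟨F, hFE, by omega, hdis, hsub⟩
  · obtain ⟨F', _, hE, hc, hd, hs⟩ := restore hG hFE hdis r hsub
    exact ⟨F', hE, by omega, hd, hs⟩

lemma main [Fintype V] : ∀ (n : ℕ) (s : Finset V), s.card ≤ n → ∀ G : SimpleGraph V, G.IsAcyclic →
    (∀ a ∈ s, ∀ b ∈ s, G.Reachable a b) →
    (∀ e ∈ G.edgeSet, ∀ x, x ∈ e → x ∈ s) →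
    ∀ X : Finset V, X ⊆ s → ∀ r ∈ s,
    ∃ F : Finset (Sym2 V), (F : Set (Sym2 V)) ⊆ G.edgeSet ∧ F.card ≤ 5 * X.card ∧
      IsDismembering G (↑X) F ∧
      (((G.deleteEdges (F : Set (Sym2 V))).connectedComponentMk r).supp ∩ (↑X ∪ edgeVerts F)).Subsingleton := by
  intro n
  induction n with
  | zero =>
    intro s hs G hG hconn hedge X hX r hr
    rw [Nat.le_zero, Finset.card_eq_zero] at hs
    subst hs
    exact absurd hr (by simp)
  | succ n ih =>
    intro s hs G hG hconn hedge X hX r hr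
    by_cases hsmall : s.card ≤ 1
    · -- base case: at most one vertex
      refine ⟨∅, by simp, by simp, ?_, ?_⟩
      · intro c
        left
        intro y hy z hz
        have hy' : y ∈ (↑X : Set V) := by
          rcases hy.2 with h | h
          · exact h
          · obtain ⟨e, he, -⟩ := h
            simp at he
        have hz' : z ∈ (↑X : Set V) := by
          rcases hz.2 with h | h
          · exact h
          · obtain ⟨e, he, -⟩ := h
            simp at he
        exact Finset.card_le_one.mp hsmall y (hX hy') z (hX hz')
      · intro y hy z hz
        have hy' : y ∈ (↑X : Set V) := by
          rcases hy.2 with h | h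
          · exact h
          · obtain ⟨e, he, -⟩ := h
            simp at he
        have hz' : z ∈ (↑X : Set V) := by
          rcases hz.2 with h | h
          · exact h
          · obtain ⟨e, he, -⟩ := h
            simp at he
        exact Finset.card_le_one.mp hsmall y (hX hy') z (hX hz')
    · -- inductive step: remove a leaf
      push_neg at hsmall
      obtain ⟨v, hv, u, hadj, hvr, hleaf⟩ := exists_leaf hG hconn hedge hr hsmall
      have huv_edge : s(u, v) ∈ G.edgeSet := hadj
      have hus : u ∈ s := hedge _ huv_edge u (by simp)
      have huv : u ≠ v := hadj.ne
      have hleaf' : ∀ e ∈ G.edgeSet, v ∈ e → e = s(u, v) := hleaf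
      set G' : SimpleGraph V := G.deleteEdges {s(u, v)} with hG'def
      have hG' : G'.IsAcyclic := IsAcyclic.anti (SimpleGraph.deleteEdges_le _) hG
      set s' : Finset V := s.erase v with hs'def
      have hcards' : s'.card ≤ n := by
        rw [hs'def, Finset.card_erase_of_mem hv]
        omega
      have hconn' : ∀ a ∈ s', ∀ b ∈ s', G'.Reachable a b := by
        intro a ha b hb
        rw [hs'def, Finset.mem_erase] at ha hb
        obtain ⟨w⟩ := hconn a ha.2 b hb.2
        set p : G.Walk a b := (w.toPath).val with hpdef
        have hp : p.IsPath := w.toPath.2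
        have hvp : v ∉ p.support := leaf_not_mem_path_support hleaf' hp ha.1 hb.1
        rw [hG'def]
        refine reachable_of_walk_avoiding p ?_
        intro e he
        rw [Set.mem_singleton_iff]
        rintro rfl
        exact hvp (p.snd_mem_support_of_mem_edges he)
      have hedge' : ∀ e ∈ G'.edgeSet, ∀ x, x ∈ e → x ∈ s' := by
        intro e he x hx
        rw [hG'def, edgeSet_deleteEdges] at he
        rw [hs'def, Finset.mem_erase]
        refine ⟨?_, hedge e he.1 x hx⟩
        rintro rfl
        exact he.2 (by rw [Set.mem_singleton_iff]; exact hleaf' e he.1 hx)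
      have hus' : u ∈ s' := by rw [hs'def, Finset.mem_erase]; exact ⟨huv, hus⟩
      have hrs' : r ∈ s' := by rw [hs'def, Finset.mem_erase]; exact ⟨Ne.symm hvr, hr⟩
      have hgr : ∀ F₁ : Finset (Sym2 V),
          G'.deleteEdges (F₁ : Set (Sym2 V)) = G.deleteEdges ((F₁ : Set (Sym2 V)) ∪ {s(u, v)}) := by
        intro F₁
        rw [hG'def, SimpleGraph.deleteEdges_deleteEdges, Set.union_comm]
      have hmarks_ne_v : ∀ (F₁ : Finset (Sym2 V)), (F₁ : Set (Sym2 V)) ⊆ G'.edgeSet →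
          ∀ y, y ∈ edgeVerts F₁ → y ≠ v := by
        intro F₁ hF₁E y hy
        obtain ⟨e, he, hye⟩ := hy
        intro hyv
        have hes : e ∈ G'.edgeSet := hF₁E (by exact_mod_cast he)
        rw [hG'def, edgeSet_deleteEdges] at hes
        exact hes.2 (by rw [Set.mem_singleton_iff]; exact hleaf' e hes.1 (hyv ▸ hye))
      by_cases hvX : v ∈ X
      · -- CASE II : v ∈ X
        have hXcard : 1 ≤ X.card := Finset.card_pos.mpr ⟨v, hvX⟩
        set X₁ : Finset V := X.erase v with hX₁def
        have hX₁card : X₁.card = X.card - 1 := Finset.card_erase_of_mem hvX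
        have hX₁s' : X₁ ⊆ s' := by
          intro x hx
          rw [hX₁def, Finset.mem_erase] at hx
          rw [hs'def, Finset.mem_erase]
          exact ⟨hx.1, hX hx.2⟩
        obtain ⟨F₁, hF₁E, hF₁card, hdis₁, hroot₁⟩ :=
          ih s' hcards' G' hG' hconn' hedge' X₁ hX₁s' u hus'
        have hF₁EG : (F₁ : Set (Sym2 V)) ⊆ G.edgeSet := by
          intro e he
          have := hF₁E he
          rw [hG'def, edgeSet_deleteEdges] at this
          exact this.1
        have huvF₁ : s(u, v) ∉ (F₁ : Set (Sym2 V)) := by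
          intro hh
          have := hF₁E hh
          rw [hG'def, edgeSet_deleteEdges] at this
          exact this.2 rfl
        have hgr₁ := hgr F₁
        have hΔviso : ∀ y, (G.deleteEdges ((F₁ : Set (Sym2 V)) ∪ {s(u, v)})).Reachable v y → y = v := by
          intro y hy
          refine reachable_isolated ?_ hy
          intro e he hv'
          exact Or.inr (by rw [Set.mem_singleton_iff]; exact hleaf' e he hv')
        by_cases hMem : ∃ w, w ∈ ((G'.deleteEdges (F₁ : Set (Sym2 V))).connectedComponentMk u).supp ∩ ((↑X₁ : Set V) ∪ edgeVerts F₁)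
        · obtain ⟨w, hw⟩ := hMem
          have hMeqΔ : ∀ y, (G.deleteEdges ((F₁ : Set (Sym2 V)) ∪ {s(u, v)})).Reachable u y →
              y ∈ (↑X₁ : Set V) ∪ edgeVerts F₁ → y = w := by
            intro y hy hyM
            refine hroot₁ ⟨mem_supp_mk.mpr ?_, hyM⟩ hw
            rw [hgr₁]
            exact hy
          have hΔuw : (G.deleteEdges ((F₁ : Set (Sym2 V)) ∪ {s(u, v)})).Reachable u w := by
            have h := mem_supp_mk.mp hw.1
            rwa [hgr₁] at h
          have hwv : w ≠ v := fun h => huv (hΔviso u ((h ▸ hΔuw).symm))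
          by_cases hwu : w = u
          · -- CASE II.b.1 : the single mark is u itself
            have hMeqΔu : ∀ y, (G.deleteEdges ((F₁ : Set (Sym2 V)) ∪ {s(u, v)})).Reachable u y →
                y ∈ (↑X₁ : Set V) ∪ edgeVerts F₁ → y = u :=
              fun y hy hyM => (hMeqΔ y hy hyM).trans hwu
            set F₂ : Finset (Sym2 V) := insert s(u, v) F₁ with hF₂def
            have huvF₁' : s(u, v) ∉ F₁ := fun hh => huvF₁ (by exact_mod_cast hh)
            have hcoe₂ : (F₂ : Set (Sym2 V)) = (F₁ : Set (Sym2 V)) ∪ {s(u, v)} := by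
              rw [hF₂def, Finset.coe_insert, ← Set.union_singleton]
            have hgrD : G.deleteEdges (F₂ : Set (Sym2 V)) =
                G.deleteEdges ((F₁ : Set (Sym2 V)) ∪ {s(u, v)}) := by rw [hcoe₂]
            have hgr₂ : G.deleteEdges (F₂ : Set (Sym2 V)) = G'.deleteEdges (F₁ : Set (Sym2 V)) := by
              rw [hgrD, hgr₁]
            have hviso₂ : ∀ y, (G.deleteEdges (F₂ : Set (Sym2 V))).Reachable v y → y = v := by
              intro y hy
              refine reachable_isolated ?_ hy
              intro e he hv'
              rw [hcoe₂]
              exact Or.inr (by rw [Set.mem_singleton_iff]; exact hleaf' e he hv')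
            have hdisG : IsDismembering G (↑X) F₂ := by
              intro cc
              obtain ⟨x', rfl⟩ := cc.exists_rep
              by_cases hx'v : (G.deleteEdges (F₂ : Set (Sym2 V))).Reachable x' v
              · have hx'eq : x' = v := hviso₂ x' hx'v.symm
                apply good_single (a := v)
                intro y hy _
                exact hviso₂ y (hx'eq ▸ hy)
              · by_cases hx'u : (G.deleteEdges (F₂ : Set (Sym2 V))).Reachable x' u
                · apply good_single (a := u)
                  intro y hy hyM
                  have hyv : y ≠ v := fun h => hx'v (h ▸ hy)
                  have hKuy := hx'u.symm.trans hy
                  have hΔuy : (G.deleteEdges ((F₁ : Set (Sym2 V)) ∪ {s(u, v)})).Reachable u y := by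
                    rw [← hgrD]
                    exact hKuy
                  rcases hyM with hyX | hyV
                  · refine hMeqΔu y hΔuy (Or.inl ?_)
                    rw [hX₁def]
                    exact_mod_cast Finset.mem_erase.mpr ⟨hyv, hyX⟩
                  · rw [hF₂def, mem_edgeVerts_insert] at hyV
                    rcases hyV with hy0 | hyV
                    · rw [Sym2.mem_iff] at hy0
                      rcases hy0 with rfl | rfl
                      · rfl
                      · exact absurd rfl hyv
                    · exact hMeqΔu y hΔuy (Or.inr hyV)
                · refine good_transfer (G₁ := G') (X₁ := (↑X₁ : Set V)) (F₁ := F₁) (x₁ := x') ?_ ?_ (hdis₁ _)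
                  · intro y _
                    rw [hgr₂]
                  · intro y hyR
                    have hyK₂ : (G.deleteEdges (F₂ : Set (Sym2 V))).Reachable x' y := by
                      rw [hgr₂]
                      exact hyR
                    have hyv : y ≠ v := fun h => hx'v (h ▸ hyK₂)
                    have hyu : y ≠ u := fun h => hx'u (h ▸ hyK₂)
                    refine ⟨?_, ?_, ?_⟩
                    · rw [hX₁def]
                      simp [Finset.mem_erase, hyv]
                    · rw [hF₂def, mem_edgeVerts_insert]
                      constructor
                      · exact Or.inr
                      · rintro (hy0 | hy0)
                        · rw [Sym2.mem_iff] at hy0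
                          rcases hy0 with rfl | rfl
                          · exact absurd rfl hyu
                          · exact absurd rfl hyv
                        · exact hy0
                    · rw [hF₂def, Finset.filter_insert, if_neg]
                      rw [Sym2.mem_iff]
                      rintro (rfl | rfl)
                      · exact hyu rfl
                      · exact hyv rfl
            have hF₂EG : (F₂ : Set (Sym2 V)) ⊆ G.edgeSet := by
              rw [hcoe₂]
              rintro e (he | he)
              · exact hF₁EG he
              · rw [Set.mem_singleton_iff] at he
                subst he
                exact huv_edge
            have hF₂card : F₂.card = F₁.card + 1 := by
              rw [hF₂def, Finset.card_insert_of_notMem huvF₁']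
            exact finish_root hG hF₂EG hdisG r (by omega)
          · -- CASE II.b.2 : the single mark w differs from u
            obtain ⟨p, hp, hpF⟩ := exists_path_avoiding hΔuw.symm
            obtain ⟨z, hz, t, hpeq⟩ := (Walk.not_nil_iff (p := p)).mp (Walk.not_nil_of_ne hwu)
            have hzv : z ≠ v := by
              intro h
              have hze : s(w, z) ∈ G.edgeSet := hz
              have h2 := hleaf' _ hze (by rw [h]; simp)
              rw [Sym2.eq_iff] at h2
              rcases h2 with ⟨h3, h4⟩ | ⟨h3, h4⟩
              · exact hwu h3
              · exact hwv h3
            have hzw : z ≠ w := fun h => hz.ne h.symm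
            have hewp : s(w, z) ∈ p.edges := by
              rw [hpeq, Walk.edges_cons]
              exact List.mem_cons_self
            have hewF : s(w, z) ∉ (F₁ : Set (Sym2 V)) ∪ {s(u, v)} := hpF _ hewp
            have hewF₁ : s(w, z) ∉ F₁ := fun hh => hewF (Or.inl (by exact_mod_cast hh))
            have hewuv : s(w, z) ≠ s(u, v) := fun hh =>
              hewF (Or.inr (by rw [Set.mem_singleton_iff]; exact hh))
            set F₂ : Finset (Sym2 V) := insert s(w, z) (insert s(u, v) F₁) with hF₂def
            have huvF₁' : s(u, v) ∉ F₁ := fun hh => huvF₁ (by exact_mod_cast hh)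
            have hcoe₂ : (F₂ : Set (Sym2 V)) = ((F₁ : Set (Sym2 V)) ∪ {s(u, v)}) ∪ {s(w, z)} := by
              rw [hF₂def, Finset.coe_insert, Finset.coe_insert]
              ext e
              simp only [Set.mem_insert_iff, Set.mem_union, Set.mem_singleton_iff,
                Finset.mem_coe]
              tauto
            have hgrD : G.deleteEdges (F₂ : Set (Sym2 V)) =
                G.deleteEdges (((F₁ : Set (Sym2 V)) ∪ {s(u, v)}) ∪ {s(w, z)}) := by rw [hcoe₂]
            have hmono₂ : ∀ x y, (G.deleteEdges (F₂ : Set (Sym2 V))).Reachable x y →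
                (G.deleteEdges ((F₁ : Set (Sym2 V)) ∪ {s(u, v)})).Reachable x y := by
              intro x y hxy
              rw [hgrD] at hxy
              exact reach_mono Set.subset_union_left hxy
            have hewF₂ : s(w, z) ∈ (F₂ : Set (Sym2 V)) := by rw [hcoe₂]; exact Or.inr rfl
            have NWz : ¬ (G.deleteEdges (F₂ : Set (Sym2 V))).Reachable w z := by
              refine not_reachable_deleteEdges hG (Walk.cons hz Walk.nil) ?_ (by simp) hewF₂
              simp [Walk.cons_isPath_iff, hz.ne]
            have NWu : ¬ (G.deleteEdges (F₂ : Set (Sym2 V))).Reachable w u :=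
              not_reachable_deleteEdges hG p hp hewp hewF₂
            have Pzu : (G.deleteEdges (F₂ : Set (Sym2 V))).Reachable z u := by
              refine reachable_of_walk_avoiding t ?_
              intro e he
              rw [hcoe₂]
              rintro (heS | he2)
              · exact hpF e (by rw [hpeq, Walk.edges_cons]; exact List.mem_cons_of_mem _ he) heS
              · rw [Set.mem_singleton_iff] at he2
                subst he2
                have := hp.edges_nodup
                rw [hpeq, Walk.edges_cons, List.nodup_cons] at this
                exact this.1 he
            have hviso₂ : ∀ y, (G.deleteEdges (F₂ : Set (Sym2 V))).Reachable v y → y = v := by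
              intro y hy
              refine reachable_isolated ?_ hy
              intro e he hv'
              rw [hcoe₂]
              exact Or.inl (Or.inr (by rw [Set.mem_singleton_iff]; exact hleaf' e he hv'))
            have hΔuz : (G.deleteEdges ((F₁ : Set (Sym2 V)) ∪ {s(u, v)})).Reachable u z := by
              refine hΔuw.trans ⟨Walk.cons ?_ Walk.nil⟩
              rw [SimpleGraph.deleteEdges_adj]
              exact ⟨hz, hewF⟩
            have hFu : F₁.filter (fun e => u ∈ e) = ∅ := by
              rw [Finset.filter_eq_empty_iff]
              intro f hf huf
              exact hwu (hMeqΔ u (Reachable.refl u) (Or.inr ⟨f, hf, huf⟩)).symm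
            have hFz : F₁.filter (fun e => z ∈ e) = ∅ := by
              rw [Finset.filter_eq_empty_iff]
              intro f hf hzf
              exact hzw (hMeqΔ z hΔuz (Or.inr ⟨f, hf, hzf⟩))
            have hdisG : IsDismembering G (↑X) F₂ := by
              intro cc
              obtain ⟨x', rfl⟩ := cc.exists_rep
              by_cases hx'v : (G.deleteEdges (F₂ : Set (Sym2 V))).Reachable x' v
              · have hx'eq : x' = v := hviso₂ x' hx'v.symm
                apply good_single (a := v)
                intro y hy _
                exact hviso₂ y (hx'eq ▸ hy)
              · by_cases hΔu : (G.deleteEdges ((F₁ : Set (Sym2 V)) ∪ {s(u, v)})).Reachable x' u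
                · have hcand : ∀ y, (G.deleteEdges (F₂ : Set (Sym2 V))).Reachable x' y →
                      y ∈ (↑X : Set V) ∪ edgeVerts F₂ → y = w ∨ y = u ∨ y = z := by
                    intro y hy hyM
                    have hyv : y ≠ v := fun h => hx'v (h ▸ hy)
                    have hΔy : (G.deleteEdges ((F₁ : Set (Sym2 V)) ∪ {s(u, v)})).Reachable u y :=
                      hΔu.symm.trans (hmono₂ _ _ hy)
                    rcases hyM with hyX | hyV
                    · refine Or.inl (hMeqΔ y hΔy (Or.inl ?_))
                      rw [hX₁def]
                      exact_mod_cast Finset.mem_erase.mpr ⟨hyv, hyX⟩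
                    · rw [hF₂def, mem_edgeVerts_insert, mem_edgeVerts_insert] at hyV
                      rcases hyV with hy0 | hy0 | hyV
                      · rw [Sym2.mem_iff] at hy0
                        rcases hy0 with rfl | rfl
                        · exact Or.inl rfl
                        · exact Or.inr (Or.inr rfl)
                      · rw [Sym2.mem_iff] at hy0
                        rcases hy0 with rfl | rfl
                        · exact Or.inr (Or.inl rfl)
                        · exact absurd rfl hyv
                      · exact Or.inl (hMeqΔ y hΔy (Or.inr hyV))
                  by_cases hRw : (G.deleteEdges (F₂ : Set (Sym2 V))).Reachable x' w
                  · apply good_single (a := w)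
                    intro y hy hyM
                    rcases hcand y hy hyM with rfl | rfl | rfl
                    · rfl
                    · exact absurd (hRw.symm.trans hy) NWu
                    · exact absurd (hRw.symm.trans hy) NWz
                  · by_cases hzu : z = u
                    · apply good_single (a := u)
                      intro y hy hyM
                      rcases hcand y hy hyM with rfl | rfl | rfl
                      · exact absurd hy hRw
                      · rfl
                      · exact hzu
                    · apply good_pair (a := u) (b := z)
                      · intro y hy hyM
                        rcases hcand y hy hyM with rfl | rfl | rfl
                        · exact absurd hy hRw
                        · exact Or.inl rfl
                        · exact Or.inr rfl
                      · intro y hy hyX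
                        have hyv : y ≠ v := fun h => hx'v (h ▸ hy)
                        have hΔy : (G.deleteEdges ((F₁ : Set (Sym2 V)) ∪ {s(u, v)})).Reachable u y :=
                          hΔu.symm.trans (hmono₂ _ _ hy)
                        have hyw : y = w := hMeqΔ y hΔy (Or.inl (by
                          rw [hX₁def]
                          exact_mod_cast Finset.mem_erase.mpr ⟨hyv, hyX⟩))
                        exact hRw (hyw ▸ hy)
                      · rw [hF₂def, mem_edgeVerts_insert, mem_edgeVerts_insert]
                        exact Or.inr (Or.inl (by simp))
                      · rw [hF₂def, mem_edgeVerts_insert]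
                        exact Or.inl (by simp)
                      · exact fun h => hzu h.symm
                      · rw [hF₂def, Finset.filter_insert, if_neg, Finset.filter_insert,
                          if_pos (by simp), hFu]
                        · simp
                        · rw [Sym2.mem_iff]
                          rintro (rfl | rfl)
                          · exact hwu rfl
                          · exact hzu rfl
                      · rw [hF₂def, Finset.filter_insert, if_pos (by simp), Finset.filter_insert,
                          if_neg, hFz]
                        · simp
                        · rw [Sym2.mem_iff]
                          rintro (rfl | rfl)
                          · exact hzu rfl
                          · exact hzv rfl
                · refine good_transfer (G₁ := G') (X₁ := (↑X₁ : Set V)) (F₁ := F₁) (x₁ := x') ?_ ?_ (hdis₁ _)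
                  · intro y _
                    rw [hgr₁]
                    constructor
                    · intro hxy
                      have hst := reachable_deleteEdges_union (S' := {s(w, z)}) hxy ?_
                      · rw [← hgrD] at hst
                        exact hst
                      · rintro e he y' hy'
                        rw [Set.mem_singleton_iff] at he
                        subst he
                        rw [Sym2.mem_iff] at hy'
                        rcases hy' with rfl | rfl
                        · exact fun hh => hΔu (hh.trans hΔuw.symm)
                        · exact fun hh => hΔu (hh.trans hΔuz.symm)
                    · exact fun hxy => hmono₂ _ _ hxy
                  · intro y hyR
                    have hyΔ : (G.deleteEdges ((F₁ : Set (Sym2 V)) ∪ {s(u, v)})).Reachable x' y := by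
                      rw [hgr₁] at hyR
                      exact hyR
                    have hx'ne : x' ≠ v := fun hh => hx'v (hh ▸ Reachable.refl x')
                    have hyv : y ≠ v := fun h => hx'ne (hΔviso x' (h ▸ hyΔ).symm)
                    have hyu : y ≠ u := fun h => hΔu (h ▸ hyΔ)
                    have hyw : y ≠ w := fun h => hΔu ((h ▸ hyΔ).trans hΔuw.symm)
                    have hyz : y ≠ z := fun h => hΔu ((h ▸ hyΔ).trans hΔuz.symm)
                    refine ⟨?_, ?_, ?_⟩
                    · rw [hX₁def]
                      simp [Finset.mem_erase, hyv]
                    · rw [hF₂def, mem_edgeVerts_insert, mem_edgeVerts_insert]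
                      constructor
                      · exact fun hh => Or.inr (Or.inr hh)
                      · rintro (hy0 | hy0 | hy0)
                        · rw [Sym2.mem_iff] at hy0
                          rcases hy0 with rfl | rfl
                          · exact absurd rfl hyw
                          · exact absurd rfl hyz
                        · rw [Sym2.mem_iff] at hy0
                          rcases hy0 with rfl | rfl
                          · exact absurd rfl hyu
                          · exact absurd rfl hyv
                        · exact hy0
                    · rw [hF₂def, Finset.filter_insert, if_neg, Finset.filter_insert, if_neg]
                      · rw [Sym2.mem_iff]
                        rintro (rfl | rfl)
                        · exact hyu rfl
                        · exact hyv rfl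
                      · rw [Sym2.mem_iff]
                        rintro (rfl | rfl)
                        · exact hyw rfl
                        · exact hyz rfl
            have hF₂EG : (F₂ : Set (Sym2 V)) ⊆ G.edgeSet := by
              rw [hcoe₂]
              rintro e ((he | he) | he)
              · exact hF₁EG he
              · rw [Set.mem_singleton_iff] at he
                subst he
                exact huv_edge
              · rw [Set.mem_singleton_iff] at he
                subst he
                exact hz
            have hF₂card : F₂.card = F₁.card + 2 := by
              have hne : s(w, z) ∉ insert s(u, v) F₁ := by
                rw [Finset.mem_insert]
                rintro (hh | hh)
                · exact hewuv hh
                · exact hewF₁ hh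
              rw [hF₂def, Finset.card_insert_of_notMem hne,
                Finset.card_insert_of_notMem huvF₁']
            exact finish_root hG hF₂EG hdisG r (by omega)
        · -- CASE II.a : the component of u has no marks
          push_neg at hMem
          have hMeΔ : ∀ y, (G.deleteEdges ((F₁ : Set (Sym2 V)) ∪ {s(u, v)})).Reachable u y →
              y ∉ (↑X₁ : Set V) ∪ edgeVerts F₁ := by
            intro y hy hyM
            refine hMem y ⟨mem_supp_mk.mpr ?_, hyM⟩
            rw [hgr₁]
            exact hy
          have hdisG : IsDismembering G (↑X) F₁ := by
            intro cc
            obtain ⟨x', rfl⟩ := cc.exists_rep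
            by_cases hx'v : (G.deleteEdges (F₁ : Set (Sym2 V))).Reachable x' v
            · apply good_single (a := v)
              intro y hy hyM
              by_contra hyv
              have hKvy := hx'v.symm.trans hy
              have h2 := lift2 hleaf' hyv hKvy
              refine hMeΔ y h2 ?_
              rcases hyM with hyX | hyV
              · refine Or.inl ?_
                rw [hX₁def]
                exact_mod_cast Finset.mem_erase.mpr ⟨hyv, hyX⟩
              · exact Or.inr hyV
            · have hx'ne : x' ≠ v := fun hh => hx'v (hh ▸ Reachable.refl x')
              refine good_transfer (G₁ := G') (X₁ := (↑X₁ : Set V)) (F₁ := F₁) (x₁ := x') ?_ ?_ (hdis₁ _)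
              · intro y _
                by_cases hyv : y = v
                · subst hyv
                  refine iff_of_false ?_ hx'v
                  intro hh
                  rw [hgr₁] at hh
                  exact hx'ne (hΔviso x' hh.symm)
                · rw [hgr₁]
                  exact (lift1 hleaf' hx'ne hyv).symm
              · intro y hyR
                have hyK : (G.deleteEdges (F₁ : Set (Sym2 V))).Reachable x' y := by
                  rw [hgr₁] at hyR
                  exact reach_mono Set.subset_union_left hyR
                have hyv : y ≠ v := fun h => hx'v (h ▸ hyK)
                refine ⟨?_, Iff.rfl, rfl⟩
                rw [hX₁def]
                simp [Finset.mem_erase, hyv]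
          exact finish_root hG hF₁EG hdisG r (by omega)
      · -- CASE I : v ∉ X
        have hXs' : X ⊆ s' := by
          intro x hx
          rw [hs'def, Finset.mem_erase]
          exact ⟨fun hh => hvX (hh ▸ hx), hX hx⟩
        obtain ⟨F₁, hF₁E, hF₁card, hdis₁, hroot₁⟩ :=
          ih s' hcards' G' hG' hconn' hedge' X hXs' r hrs'
        have hF₁EG : (F₁ : Set (Sym2 V)) ⊆ G.edgeSet := by
          intro e he
          have := hF₁E he
          rw [hG'def, edgeSet_deleteEdges] at this
          exact this.1
        have hXne_v : ∀ y, y ∈ (↑X : Set V) ∪ edgeVerts F₁ → y ≠ v := by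
          rintro y (hy | hy)
          · intro h
            exact hvX (h ▸ hy)
          · exact hmarks_ne_v F₁ hF₁E y hy
        have hlift : ∀ x' y, x' ≠ v → y ≠ v →
            ((G.deleteEdges (F₁ : Set (Sym2 V))).Reachable x' y ↔
              (G'.deleteEdges (F₁ : Set (Sym2 V))).Reachable x' y) := by
          intro x' y hx' hy
          rw [hgr F₁]
          exact lift1 hleaf' hx' hy
        have huvK : (G.deleteEdges (F₁ : Set (Sym2 V))).Reachable v u := by
          refine ⟨Walk.cons ?_ Walk.nil⟩
          rw [SimpleGraph.deleteEdges_adj]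
          refine ⟨hadj.symm, fun hh => ?_⟩
          have := hF₁E hh
          rw [hG'def, edgeSet_deleteEdges] at this
          exact this.2 (by rw [Set.mem_singleton_iff, Sym2.eq_swap])
        refine ⟨F₁, hF₁EG, hF₁card, ?_, ?_⟩
        · intro cc
          obtain ⟨x', rfl⟩ := cc.exists_rep
          by_cases hx'v : (G.deleteEdges (F₁ : Set (Sym2 V))).Reachable x' v
          · refine good_transfer (G₁ := G') (X₁ := (↑X : Set V)) (F₁ := F₁) (x₁ := u) ?_ ?_ (hdis₁ _)
            · intro y hy
              have hyv : y ≠ v := by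
                rcases hy with ((hy | hy) | hy) | hy
                · exact hXne_v y (Or.inl hy)
                · exact hXne_v y (Or.inr hy)
                · exact hXne_v y (Or.inl hy)
                · exact hXne_v y (Or.inr hy)
              rw [← hlift u y huv hyv]
              constructor
              · intro h
                exact (hx'v.trans huvK).trans h
              · intro h
                have h2 := lift2 hleaf' hyv (hx'v.symm.trans h)
                rw [hlift u y huv hyv, hgr F₁]
                exact h2
            · exact fun y _ => ⟨Iff.rfl, Iff.rfl, rfl⟩
          · have hx'ne : x' ≠ v := fun hh => hx'v (hh ▸ Reachable.refl x')
            refine good_transfer (G₁ := G') (X₁ := (↑X : Set V)) (F₁ := F₁) (x₁ := x') ?_ ?_ (hdis₁ _)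
            · intro y hy
              have hyv : y ≠ v := by
                rcases hy with ((hy | hy) | hy) | hy
                · exact hXne_v y (Or.inl hy)
                · exact hXne_v y (Or.inr hy)
                · exact hXne_v y (Or.inl hy)
                · exact hXne_v y (Or.inr hy)
              exact (hlift x' y hx'ne hyv).symm
            · exact fun y _ => ⟨Iff.rfl, Iff.rfl, rfl⟩
        · intro y hy z hz
          rw [Set.mem_inter_iff, mem_supp_mk] at hy hz
          have hyv : y ≠ v := hXne_v y hy.2
          have hzv : z ≠ v := hXne_v z hz.2
          have hy' : y ∈ ((G'.deleteEdges (F₁ : Set (Sym2 V))).connectedComponentMk r).supp ∩ (↑X ∪ edgeVerts F₁) :=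
            ⟨mem_supp_mk.mpr ((hlift r y (Ne.symm hvr) hyv).mp hy.1), hy.2⟩
          have hz' : z ∈ ((G'.deleteEdges (F₁ : Set (Sym2 V))).connectedComponentMk r).supp ∩ (↑X ∪ edgeVerts F₁) :=
            ⟨mem_supp_mk.mpr ((hlift r z (Ne.symm hvr) hzv).mp hz.1), hz.2⟩
          exact hroot₁ hy' hz'

end Dismember

/-- For every finite tree `T` and vertex set `X`, there is a dismembering set `F`
for `(T, X)` with `|F| ≤ 5 |X|`. -/
theorem stmt3 {V : Type*} [Fintype V] [DecidableEq V] (T : SimpleGraph V)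
    (hT : T.IsTree) (X : Finset V) :
    ∃ F : Finset (Sym2 V), (F : Set (Sym2 V)) ⊆ T.edgeSet ∧
      F.card ≤ 5 * X.card ∧ IsDismembering T (↑X) F := by
  classical
  have hne : Nonempty V := hT.isConnected.nonempty
  obtain ⟨r⟩ := hne
  obtain ⟨F, hFE, hcard, hdis, -⟩ :=
    Dismember.main (Fintype.card V) Finset.univ (by simp) T hT.IsAcyclic
      (fun a _ b _ => hT.isConnected.preconnected a b)
      (fun _ _ x _ => Finset.mem_univ x) X (Finset.subset_univ X) r (Finset.mem_univ r)
  exact ⟨F, hFE, hcard, hdis⟩
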